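/- If the CWENO nonlinear weights satisfy ω_{j,k} = C_k + O(h) for k ∈ {0, L, R} and the component polynomials satisfy P_j^{(2)}(x) = U(x) + O(h³) and P_{j,L}^{(1)}(x), P_{j,R}^{(1)}(x) = U(x) + O(h²) uniformly on the cell, then the reconstruction P_rec = ω_{j,0} P_{j,0} + ω_{j,L} P_{j,L}^{(1)} + ω_{j,R} P_{j,R}^{(1)}, where P_{j,0} = (P_j^{(2)} − C_L P_{j,L}^{(1)} − C_R P_{j,R}^{(1)})/C_0, satisfies P_rec(x) = U(x) + O(h³) uniformly on the cell. -/
import Mathlib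


open Finset

/-- Third-order accuracy of the CWENO reconstruction: if the nonlinear weights satisfy
`ω_k = C_k + O(h)` and the component polynomials satisfy `P^{(2)} = U + O(h³)`,
`P_L, P_R = U + O(h²)` uniformly on the cell, then
`P_rec = ω_0 P_0 + ω_L P_L + ω_R P_R` with `P_0 = (P^{(2)} - C_L P_L - C_R P_R)/C_0`
satisfies `P_rec = U + O(h³)` uniformly on the cell. Index `0 ↔ 0`, `1 ↔ L`, `2 ↔ R`. -/
theorem cweno_third_order (U : ℝ → ℝ) (C : Fin 3 → ℝ)
    (hC : ∀ k, C k ∈ Set.Ioo (0 : ℝ) 1) (hCsum : ∑ k, C k = 1)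
    (M : ℝ) (cell : ℝ → Set ℝ) (ω : ℝ → Fin 3 → ℝ)
    (P2 PL PR : ℝ → ℝ → ℝ)
    (hωpos : ∀ h ∈ Set.Ioc (0 : ℝ) 1, ∀ k, 0 ≤ ω h k)
    (hωsum : ∀ h ∈ Set.Ioc (0 : ℝ) 1, ∑ k, ω h k = 1)
    (hωC : ∀ h ∈ Set.Ioc (0 : ℝ) 1, ∀ k, |ω h k - C k| ≤ M * h)
    (hP2 : ∀ h ∈ Set.Ioc (0 : ℝ) 1, ∀ x ∈ cell h, |P2 h x - U x| ≤ M * h ^ 3)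
    (hPL : ∀ h ∈ Set.Ioc (0 : ℝ) 1, ∀ x ∈ cell h, |PL h x - U x| ≤ M * h ^ 2)
    (hPR : ∀ h ∈ Set.Ioc (0 : ℝ) 1, ∀ x ∈ cell h, |PR h x - U x| ≤ M * h ^ 2) :
    ∃ M' : ℝ, ∀ h ∈ Set.Ioc (0 : ℝ) 1, ∀ x ∈ cell h,
      |ω h 0 * ((P2 h x - C 1 * PL h x - C 2 * PR h x) / C 0) +
          ω h 1 * PL h x + ω h 2 * PR h x - U x| ≤ M' * h ^ 3 := by
  refine ⟨(M + 2 * M ^ 2) / C 0, ?_⟩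
  intro h hh x hx
  have hC0 : 0 < C 0 := (hC 0).1
  have hC1 : 0 < C 1 := (hC 1).1
  have hC2 : 0 < C 2 := (hC 2).1
  have hC0' : C 0 ≠ 0 := ne_of_gt hC0
  have hCs : C 0 + C 1 + C 2 = 1 := by simpa [Fin.sum_univ_three] using hCsum
  have hωs : ω h 0 + ω h 1 + ω h 2 = 1 := by simpa [Fin.sum_univ_three] using hωsum h hh
  have hω0 : 0 ≤ ω h 0 := hωpos h hh 0
  have hω1 : 0 ≤ ω h 1 := hωpos h hh 1
  have hω2 : 0 ≤ ω h 2 := hωpos h hh 2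
  have hω0le : ω h 0 ≤ 1 := by linarith
  have hhpos : 0 < h := hh.1
  have hhle : h ≤ 1 := hh.2
  have hM : 0 ≤ M := by
    have := (abs_nonneg (ω h 0 - C 0)).trans (hωC h hh 0)
    nlinarith
  have hMh : 0 ≤ M * h := mul_nonneg hM hhpos.le
  have e2 := hP2 h hh x hx
  have eL := hPL h hh x hx
  have eR := hPR h hh x hx
  have w0 := hωC h hh 0
  have w1 := hωC h hh 1
  have w2 := hωC h hh 2
  have key : ω h 0 * ((P2 h x - C 1 * PL h x - C 2 * PR h x) / C 0) +
      ω h 1 * PL h x + ω h 2 * PR h x - U x =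
      (ω h 0 / C 0) * (P2 h x - U x) +
      ((ω h 1 * C 0 - ω h 0 * C 1) / C 0) * (PL h x - U x) +
      ((ω h 2 * C 0 - ω h 0 * C 2) / C 0) * (PR h x - U x) := by
    field_simp
    linear_combination (C 0 * U x) * hωs + (-(ω h 0) * U x) * hCs
  rw [key]
  have b1 : |ω h 1 * C 0 - ω h 0 * C 1| ≤ M * h := by
    have hr : ω h 1 * C 0 - ω h 0 * C 1 = (ω h 1 - C 1) * C 0 - (ω h 0 - C 0) * C 1 := by ring
    have hnn : (0:ℝ) ≤ 1 - C 0 - C 1 := by linarith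
    calc |ω h 1 * C 0 - ω h 0 * C 1|
        ≤ |(ω h 1 - C 1) * C 0| + |(ω h 0 - C 0) * C 1| := by rw [hr]; exact abs_sub _ _
      _ = |ω h 1 - C 1| * C 0 + |ω h 0 - C 0| * C 1 := by
          rw [abs_mul, abs_mul, abs_of_pos hC0, abs_of_pos hC1]
      _ ≤ M * h * C 0 + M * h * C 1 :=
          add_le_add (mul_le_mul_of_nonneg_right w1 hC0.le)
            (mul_le_mul_of_nonneg_right w0 hC1.le)
      _ ≤ M * h := by nlinarith [mul_nonneg hMh hnn]
  have b2 : |ω h 2 * C 0 - ω h 0 * C 2| ≤ M * h := by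
    have hr : ω h 2 * C 0 - ω h 0 * C 2 = (ω h 2 - C 2) * C 0 - (ω h 0 - C 0) * C 2 := by ring
    have hnn : (0:ℝ) ≤ 1 - C 0 - C 2 := by linarith
    calc |ω h 2 * C 0 - ω h 0 * C 2|
        ≤ |(ω h 2 - C 2) * C 0| + |(ω h 0 - C 0) * C 2| := by rw [hr]; exact abs_sub _ _
      _ = |ω h 2 - C 2| * C 0 + |ω h 0 - C 0| * C 2 := by
          rw [abs_mul, abs_mul, abs_of_pos hC0, abs_of_pos hC2]
      _ ≤ M * h * C 0 + M * h * C 2 :=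
          add_le_add (mul_le_mul_of_nonneg_right w2 hC0.le)
            (mul_le_mul_of_nonneg_right w0 hC2.le)
      _ ≤ M * h := by nlinarith [mul_nonneg hMh hnn]
  have t1 : |(ω h 0 / C 0) * (P2 h x - U x)| ≤ (1 / C 0) * (M * h ^ 3) := by
    rw [abs_mul, abs_div, abs_of_nonneg hω0, abs_of_pos hC0]
    exact mul_le_mul (by rw [div_le_div_iff₀ hC0 hC0]; nlinarith) e2 (abs_nonneg _)
      (by positivity)
  have t2 : |((ω h 1 * C 0 - ω h 0 * C 1) / C 0) * (PL h x - U x)| ≤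
      ((M * h) / C 0) * (M * h ^ 2) := by
    rw [abs_mul, abs_div, abs_of_pos hC0]
    exact mul_le_mul (by gcongr) eL (abs_nonneg _) (by positivity)
  have t3 : |((ω h 2 * C 0 - ω h 0 * C 2) / C 0) * (PR h x - U x)| ≤
      ((M * h) / C 0) * (M * h ^ 2) := by
    rw [abs_mul, abs_div, abs_of_pos hC0]
    exact mul_le_mul (by gcongr) eR (abs_nonneg _) (by positivity)
  calc |(ω h 0 / C 0) * (P2 h x - U x) +
        ((ω h 1 * C 0 - ω h 0 * C 1) / C 0) * (PL h x - U x) +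
        ((ω h 2 * C 0 - ω h 0 * C 2) / C 0) * (PR h x - U x)|
      ≤ |(ω h 0 / C 0) * (P2 h x - U x)| +
        |((ω h 1 * C 0 - ω h 0 * C 1) / C 0) * (PL h x - U x)| +
        |((ω h 2 * C 0 - ω h 0 * C 2) / C 0) * (PR h x - U x)| := abs_add_three _ _ _
    _ ≤ (1 / C 0) * (M * h ^ 3) + ((M * h) / C 0) * (M * h ^ 2) +
        ((M * h) / C 0) * (M * h ^ 2) := add_le_add (add_le_add t1 t2) t3
    _ = (M + 2 * M ^ 2) / C 0 * h ^ 3 := by field_simp; ring
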